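/- Let ω : I → ℝ satisfy ω(i) > 0 for all i ∈ I. Let n, m ∈ I, let S, T ⊆ I be finite sets with n ∉ S and m ∉ T, and set v = e_n − ∑_{s∈S} e_s and w = e_m − ∑_{t∈T} e_t. Assume ω(n) − ∑_{s∈S} ω(s) > 0, ω(m) − ∑_{t∈T} ω(t) > 0, and Q(v,w) = 0. Then exactly one of the following holds: (i) n ∉ T, m ∉ S and S ∩ T = ∅ (v and w share no basis vector); (ii) n ∈ T, m ∉ S and |S ∩ T| = 1; or (iii) m ∈ S, n ∉ T and |S ∩ T| = 1. In particular, either v and w share no basis vector or they share exactly two: one occurring with coefficient −1 in both, and one occurring with coefficient +1 in one and −1 in the other. -/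
import Mathlib


/-- The free ℤ-module with basis {h} ∪ {e_i : i ∈ I}:
the second homology lattice of a blow-up of ℂP². -/
abbrev BlowupLattice (I : Type*) : Type _ := ℤ × (I →₀ ℤ)

/-- The class h of the line. -/
def Hclass {I : Type*} : BlowupLattice I := (1, 0)

/-- The exceptional class e_i. -/
noncomputable def Eclass {I : Type*} (i : I) : BlowupLattice I := (0, Finsupp.single i 1)

/-- The intersection form: Q(h,h) = 1, Q(e_i,e_i) = -1, and all other pairings of
distinct basis vectors vanish. -/
def Qform {I : Type*} (v w : BlowupLattice I) : ℤ :=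
  v.1 * w.1 - v.2.sum fun i c => c * w.2 i

lemma Qform_eval {I : Type*} [DecidableEq I] (n m : I) (S T : Finset I)
    (v w : BlowupLattice I)
    (hv : v = Eclass n - ∑ s ∈ S, Eclass s)
    (hw : w = Eclass m - ∑ t ∈ T, Eclass t) :
    Qform v w = -((if n = m then 1 else 0) - (if n ∈ T then 1 else 0)
      - ((if m ∈ S then (1:ℤ) else 0) - (S ∩ T).card)) := by
  have hw2 : ∀ i, w.2 i = (if i = m then 1 else 0) - (if i ∈ T then 1 else 0) := by
    subst hw; intro i
    simp [Eclass, Prod.snd_sum, Finsupp.single_apply, Finset.sum_apply', Finset.sum_ite_eq,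
      eq_comm]
  have hv1 : v.1 = 0 := by subst hv; simp [Eclass, Prod.fst_sum]
  have hv2 : v.2 = Finsupp.single n 1 - ∑ s ∈ S, Finsupp.single s 1 := by
    subst hv; simp [Eclass, Prod.snd_sum]
  have hsum : v.2.sum (fun i c => c * w.2 i) = w.2 n - ∑ s ∈ S, w.2 s := by
    rw [hv2, Finsupp.sum_sub_index (by intros; ring),
      Finsupp.sum_single_index (by simp),
      ← Finsupp.sum_finset_sum_index (by simp) (by intros; ring)]
    simp [Finsupp.sum_single_index]
  rw [Qform, hv1, hsum]
  have h1 : ∑ s ∈ S, w.2 s = (if m ∈ S then (1:ℤ) else 0) - (S ∩ T).card := by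
    simp only [hw2]
    rw [Finset.sum_sub_distrib]
    congr 1
    · simp [Finset.sum_ite_eq']
    · rw [Finset.sum_ite_mem]; simp
  rw [h1, hw2]; ring


theorem stmt_2 {I : Type*} [DecidableEq I] (ω : I → ℝ) (hω : ∀ i, 0 < ω i)
    (n m : I) (S T : Finset I) (hnS : n ∉ S) (hmT : m ∉ T)
    (v w : BlowupLattice I)
    (hv : v = Eclass n - ∑ s ∈ S, Eclass s)
    (hw : w = Eclass m - ∑ t ∈ T, Eclass t)
    (hωv : 0 < ω n - ∑ s ∈ S, ω s)
    (hωw : 0 < ω m - ∑ t ∈ T, ω t)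
    (hQ : Qform v w = 0) :
    ((n ∉ T ∧ m ∉ S ∧ S ∩ T = ∅) ∧
      ¬(n ∈ T ∧ m ∉ S ∧ (S ∩ T).card = 1) ∧ ¬(m ∈ S ∧ n ∉ T ∧ (S ∩ T).card = 1)) ∨
    (¬(n ∉ T ∧ m ∉ S ∧ S ∩ T = ∅) ∧
      (n ∈ T ∧ m ∉ S ∧ (S ∩ T).card = 1) ∧ ¬(m ∈ S ∧ n ∉ T ∧ (S ∩ T).card = 1)) ∨
    (¬(n ∉ T ∧ m ∉ S ∧ S ∩ T = ∅) ∧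
      ¬(n ∈ T ∧ m ∉ S ∧ (S ∩ T).card = 1) ∧ (m ∈ S ∧ n ∉ T ∧ (S ∩ T).card = 1)) := by
  rw [Qform_eval n m S T v w hv hw] at hQ
  have hnm : n ≠ m := by
    rintro rfl
    rw [if_pos rfl, if_neg hmT, if_neg hnS] at hQ
    omega
  rw [if_neg hnm] at hQ
  by_cases hnT : n ∈ T <;> by_cases hmS : m ∈ S
  · -- impossible case: |S ∩ T| = 2 contradicts areas
    exfalso
    rw [if_pos hnT, if_pos hmS] at hQ
    have hcard : (S ∩ T).card = 2 := by omega
    obtain ⟨a, b, hab, hST⟩ := Finset.card_eq_two.mp hcard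
    have haS : a ∈ S ∧ a ∈ T := by
      have : a ∈ S ∩ T := hST ▸ by simp
      exact Finset.mem_inter.mp this
    have hbS : b ∈ S ∧ b ∈ T := by
      have : b ∈ S ∩ T := hST ▸ by simp
      exact Finset.mem_inter.mp this
    have hma : m ≠ a := fun h => hmT (h ▸ haS.2)
    have hmb : m ≠ b := fun h => hmT (h ▸ hbS.2)
    have hna : n ≠ a := fun h => hnS (h ▸ haS.1)
    have hnb : n ≠ b := fun h => hnS (h ▸ hbS.1)
    have hS : ω m + ω a + ω b ≤ ∑ s ∈ S, ω s := by
      have hsub : ({m, a, b} : Finset I) ⊆ S := by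
        intro x hx
        simp only [Finset.mem_insert, Finset.mem_singleton] at hx
        rcases hx with rfl | rfl | rfl
        exacts [hmS, haS.1, hbS.1]
      calc ω m + ω a + ω b = ∑ x ∈ ({m, a, b} : Finset I), ω x := by
            rw [Finset.sum_insert (by simp [hma, hmb]),
              Finset.sum_insert (by simp [hab]), Finset.sum_singleton]; ring
        _ ≤ ∑ s ∈ S, ω s :=
            Finset.sum_le_sum_of_subset_of_nonneg hsub fun i _ _ => (hω i).le
    have hT : ω n + ω a + ω b ≤ ∑ t ∈ T, ω t := by
      have hsub : ({n, a, b} : Finset I) ⊆ T := by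
        intro x hx
        simp only [Finset.mem_insert, Finset.mem_singleton] at hx
        rcases hx with rfl | rfl | rfl
        exacts [hnT, haS.2, hbS.2]
      calc ω n + ω a + ω b = ∑ x ∈ ({n, a, b} : Finset I), ω x := by
            rw [Finset.sum_insert (by simp [hna, hnb]),
              Finset.sum_insert (by simp [hab]), Finset.sum_singleton]; ring
        _ ≤ ∑ t ∈ T, ω t :=
            Finset.sum_le_sum_of_subset_of_nonneg hsub fun i _ _ => (hω i).le
    have := hω a
    have := hω b
    linarith
  · -- case (ii)
    rw [if_pos hnT, if_neg hmS] at hQ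
    have hcard : (S ∩ T).card = 1 := by omega
    exact Or.inr (Or.inl ⟨fun h => h.1 hnT, ⟨hnT, hmS, hcard⟩, fun h => hmS h.1⟩)
  · -- case (iii)
    rw [if_neg hnT, if_pos hmS] at hQ
    have hcard : (S ∩ T).card = 1 := by omega
    exact Or.inr (Or.inr ⟨fun h => h.2.1 hmS, fun h => hnT h.1, hmS, hnT, hcard⟩)
  · -- case (i)
    rw [if_neg hnT, if_neg hmS] at hQ
    have hcard : (S ∩ T).card = 0 := by omega
    exact Or.inl ⟨⟨hnT, hmS, Finset.card_eq_zero.mp hcard⟩,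
      fun h => hnT h.1, fun h => hmS h.1⟩
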